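/- arXiv:2208.05869 — 4 statements merged into one kernel-verified Lean document; each statement's English description precedes it below -/
import Mathlib

section
/- Every weakly l.f.g.u. weakly positive monoid 𝓗 = (H, ≼) such that every ≼-irreducible is a ≼-atom, is loft and hence FmF-atomic. -/
open Pointwise

namespace FactPaper

/-- `u` is a `≼`-unit for the preorder-like relation `r` on a monoid. -/
def RUnit {M : Type*} [Monoid M] (r : M → M → Prop) (u : M) : Prop :=
  r u 1 ∧ r 1 u

/-- `u` is a `≼`-non-unit. -/
def RNonUnit {M : Type*} [Monoid M] (r : M → M → Prop) (u : M) : Prop :=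
  ¬ RUnit r u

/-- The strict part `≺` of the relation `r`. -/
def RLt {M : Type*} (r : M → M → Prop) (x y : M) : Prop :=
  r x y ∧ ¬ r y x

/-- `a` is a `≼`-irreducible. -/
def RIrred {M : Type*} [Monoid M] (r : M → M → Prop) (a : M) : Prop :=
  RNonUnit r a ∧
    ∀ y z : M, RNonUnit r y → RNonUnit r z → RLt r y a → RLt r z a → a ≠ y * z

/-- `a` is a `≼`-atom. -/
def RAtom {M : Type*} [Monoid M] (r : M → M → Prop) (a : M) : Prop :=
  RNonUnit r a ∧ ∀ y z : M, RNonUnit r y → RNonUnit r z → a ≠ y * z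

/-- `a` is a `≼`-quark. -/
def RQuark {M : Type*} [Monoid M] (r : M → M → Prop) (a : M) : Prop :=
  RNonUnit r a ∧ ¬ ∃ b : M, RNonUnit r b ∧ RLt r b a

/-- The divisibility preorder: `Dvd2 x y` iff `y ∈ M x M`. -/
def Dvd2 {M : Type*} [Monoid M] (x y : M) : Prop :=
  ∃ u v : M, y = u * x * v

/-- The restriction of a relation on `M` to a submonoid `K`. -/
def SubRel {M : Type*} [Monoid M] (r : M → M → Prop) (K : Submonoid M) (a b : K) : Prop :=
  r (a : M) (b : M)

/-- The preorder `⊑` on words induced by `r`: an injection of indices matching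
`r`-equivalent letters. -/
def WordLe {M : Type*} (r : M → M → Prop) (l m : List M) : Prop :=
  ∃ σ : Fin l.length ↪ Fin m.length,
    ∀ i : Fin l.length, r (l.get i) (m.get (σ i)) ∧ r (m.get (σ i)) (l.get i)

/-- `⊑`-equivalence of words. -/
def WordEquiv {M : Type*} (r : M → M → Prop) (l m : List M) : Prop :=
  WordLe r l m ∧ WordLe r m l

/-- `l` is a `≼`-factorization of `x`: a word of `≼`-irreducibles with product `x`. -/
def IsFac {M : Type*} [Monoid M] (r : M → M → Prop) (x : M) (l : List M) : Prop :=
  (∀ a ∈ l, RIrred r a) ∧ l.prod = x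

/-- `l` is a minimal `≼`-factorization of `x`: a `⊑`-minimal `≼`-factorization. -/
def IsMinFac {M : Type*} [Monoid M] (r : M → M → Prop) (x : M) (l : List M) : Prop :=
  IsFac r x l ∧ ∀ m : List M, IsFac r x m → WordLe r m l → WordLe r l m

/-- `l` is an atomic `≼`-factorization of `x`. -/
def IsAtomicFac {M : Type*} [Monoid M] (r : M → M → Prop) (x : M) (l : List M) : Prop :=
  (∀ a ∈ l, RAtom r a) ∧ l.prod = x

/-- `l` is a minimal atomic `≼`-factorization of `x`. -/
def IsMinAtomicFac {M : Type*} [Monoid M] (r : M → M → Prop) (x : M) (l : List M) : Prop :=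
  IsMinFac r x l ∧ ∀ a ∈ l, RAtom r a

/-- Every `≼`-non-unit is a non-empty product of `≼`-irreducibles. -/
def Factorable {M : Type*} [Monoid M] (r : M → M → Prop) : Prop :=
  ∀ x : M, RNonUnit r x →
    ∃ l : List M, l ≠ [] ∧ (∀ a ∈ l, RIrred r a) ∧ l.prod = x

/-- Every `≼`-non-unit is a non-empty product of `≼`-atoms. -/
def Atomic {M : Type*} [Monoid M] (r : M → M → Prop) : Prop :=
  ∀ x : M, RNonUnit r x →
    ∃ l : List M, l ≠ [] ∧ (∀ a ∈ l, RAtom r a) ∧ l.prod = x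

/-- The premonoid `(M, r)` is finitely generated up to units. -/
def IsFGU {M : Type*} [Monoid M] (r : M → M → Prop) : Prop :=
  ∃ A : Set M, A.Finite ∧
    Submonoid.closure
      {w : M | ∃ u a v : M, RUnit r u ∧ a ∈ A ∧ RUnit r v ∧ w = u * a * v} = ⊤

/-- The submonoid generated by the `∣_M`-divisors of `x` (ground monoid of the germ of a
premonoid at `x`). -/
def GermSub {M : Type*} [Monoid M] (x : M) : Submonoid M :=
  Submonoid.closure {y : M | Dvd2 y x}

/-- Membership in the smallest divisor-closed submonoid containing `x`. -/
inductive InDC {M : Type*} [Monoid M] (x : M) : M → Prop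
  | base : InDC x x
  | one : InDC x 1
  | mul {a b : M} : InDC x a → InDC x b → InDC x (a * b)
  | dvd {a b : M} : InDC x b → Dvd2 a b → InDC x a

/-- The smallest divisor-closed submonoid of `M` containing `x`. -/
def DCSub {M : Type*} [Monoid M] (x : M) : Submonoid M where
  carrier := {y : M | InDC x y}
  mul_mem' := fun ha hb => InDC.mul ha hb
  one_mem' := InDC.one

/-- `(M, r)` is a weakly positive monoid. -/
def WeaklyPositive {M : Type*} [Monoid M] (r : M → M → Prop) : Prop :=
  (∀ x u v : M, RUnit r u → RUnit r v → r (u * x * v) x) ∧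
    (∀ x a b : M, r x (a * x * b))

/-- `(M, r)` is locally of finite type (loft). -/
def IsLoft {M : Type*} [Monoid M] (r : M → M → Prop) : Prop :=
  ∀ x : M, RNonUnit r x →
    ∃ A : Set M, A.Finite ∧ A ⊆ {a : M | RIrred r a} ∧
      ∀ l : List M, IsFac r x l →
        ∃ m : List M, (∀ a ∈ m, a ∈ A) ∧ WordEquiv r l m

/-- `(M, r)` is BF-factorable. -/
def IsBFFactorable {M : Type*} [Monoid M] (r : M → M → Prop) : Prop :=
  ∀ x : M, RNonUnit r x →
    {n : ℕ | ∃ l : List M, IsFac r x l ∧ l.length = n}.Finite ∧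
      {n : ℕ | ∃ l : List M, IsFac r x l ∧ l.length = n}.Nonempty

/-- `(M, r)` is BmF-factorable. -/
def IsBmFFactorable {M : Type*} [Monoid M] (r : M → M → Prop) : Prop :=
  ∀ x : M, RNonUnit r x →
    {n : ℕ | ∃ l : List M, IsMinFac r x l ∧ l.length = n}.Finite ∧
      {n : ℕ | ∃ l : List M, IsMinFac r x l ∧ l.length = n}.Nonempty

/-- `(M, r)` is FF-factorable: modulo `⊑`-equivalence, every `≼`-non-unit has finitely
many (and at least one) `≼`-factorizations. -/
def IsFFFactorable {M : Type*} [Monoid M] (r : M → M → Prop) : Prop :=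
  ∀ x : M, RNonUnit r x →
    (∃ l : List M, IsFac r x l) ∧
      ∃ F : Set (List M), F.Finite ∧
        ∀ l : List M, IsFac r x l → ∃ m ∈ F, IsFac r x m ∧ WordEquiv r l m

/-- `(M, r)` is FmF-factorable. -/
def IsFmFFactorable {M : Type*} [Monoid M] (r : M → M → Prop) : Prop :=
  ∀ x : M, RNonUnit r x →
    (∃ l : List M, IsMinFac r x l) ∧
      ∃ F : Set (List M), F.Finite ∧
        ∀ l : List M, IsMinFac r x l → ∃ m ∈ F, IsMinFac r x m ∧ WordEquiv r l m

/-- `(M, r)` is FF-atomic. -/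
def IsFFAtomic {M : Type*} [Monoid M] (r : M → M → Prop) : Prop :=
  ∀ x : M, RNonUnit r x →
    (∃ l : List M, IsAtomicFac r x l) ∧
      ∃ F : Set (List M), F.Finite ∧
        ∀ l : List M, IsAtomicFac r x l → ∃ m ∈ F, IsAtomicFac r x m ∧ WordEquiv r l m

/-- `(M, r)` is FmF-atomic. -/
def IsFmFAtomic {M : Type*} [Monoid M] (r : M → M → Prop) : Prop :=
  ∀ x : M, RNonUnit r x →
    (∃ l : List M, IsMinAtomicFac r x l) ∧
      ∃ F : Set (List M), F.Finite ∧
        ∀ l : List M, IsMinAtomicFac r x l → ∃ m ∈ F, IsMinAtomicFac r x m ∧ WordEquiv r l m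



set_option linter.unusedSectionVars false

section Aux
variable {H : Type*} [Monoid H]

/-- letters classed by a finite list `LA` up to `r`-equivalence -/
def Classed (r : H → H → Prop) (LA : List H) (e : H) : Prop :=
  ∃ i, i < LA.length ∧ r e (LA.getD i 1) ∧ r (LA.getD i 1) e

open Classical in
noncomputable def idxE (r : H → H → Prop) (LA : List H) (e : H) : ℕ :=
  if h : Classed r LA e then Nat.find h else 0

lemma idxE_spec {r : H → H → Prop} {LA : List H} {e : H} (h : Classed r LA e) :
    idxE r LA e < LA.length ∧ r e (LA.getD (idxE r LA e) 1) ∧ r (LA.getD (idxE r LA e) 1) e := by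
  classical
  rw [idxE, dif_pos h]
  exact Nat.find_spec h

lemma classed_congr {r : H → H → Prop} {LA : List H} {e e' : H} (htrans : Transitive r)
    (h : Classed r LA e) (h1 : r e' e) (h2 : r e e') : Classed r LA e' := by
  obtain ⟨i, hi, ha, hb⟩ := h
  exact ⟨i, hi, htrans h1 ha, htrans hb h2⟩

lemma idxE_congr {r : H → H → Prop} {LA : List H} {e e' : H} (htrans : Transitive r)
    (h : Classed r LA e) (h1 : r e e') (h2 : r e' e) : idxE r LA e = idxE r LA e' := by
  classical
  have h' : Classed r LA e' := classed_congr htrans h h2 h1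
  rw [idxE, idxE, dif_pos h, dif_pos h']
  apply le_antisymm
  · obtain ⟨hi, ha, hb⟩ := idxE_spec h'
    rw [idxE, dif_pos h'] at hi ha hb
    exact Nat.find_le ⟨hi, htrans h1 ha, htrans hb h2⟩
  · obtain ⟨hi, ha, hb⟩ := idxE_spec h
    rw [idxE, dif_pos h] at hi ha hb
    exact Nat.find_le ⟨hi, htrans h2 ha, htrans hb h1⟩

/-- two letters with the same index are r-equivalent -/
lemma equiv_of_idxE_eq {r : H → H → Prop} {LA : List H} {e e' : H} (htrans : Transitive r)
    (h : Classed r LA e) (h' : Classed r LA e') (heq : idxE r LA e = idxE r LA e') :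
    r e e' ∧ r e' e := by
  obtain ⟨_, ha, hb⟩ := idxE_spec h
  obtain ⟨_, ha', hb'⟩ := idxE_spec h'
  rw [heq] at ha hb
  exact ⟨htrans ha hb', htrans ha' hb⟩

open Classical in
noncomputable def cnt (r : H → H → Prop) (LA : List H) (L : List H) (c : ℕ) : ℕ :=
  (Finset.univ.filter (fun i : Fin L.length => idxE r LA (L.get i) = c)).card


lemma get_mem' (l : List H) (i : Fin l.length) : l.get i ∈ l := l.get_mem i

lemma cnt_le_of_wordLe {r : H → H → Prop} {LA : List H} {l m : List H} (htrans : Transitive r)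
    (hl : ∀ e ∈ l, Classed r LA e) (h : WordLe r l m) (c : ℕ) :
    cnt r LA l c ≤ cnt r LA m c := by
  classical
  obtain ⟨σ, hσ⟩ := h
  unfold cnt
  apply Finset.card_le_card_of_injOn σ
  · intro i hi
    simp only [Finset.mem_coe, Finset.mem_filter, Finset.mem_univ, true_and] at hi ⊢
    rw [← hi]
    exact (idxE_congr htrans (hl _ (get_mem' l i)) (hσ i).1 (hσ i).2).symm
  · exact Set.injOn_of_injective σ.injective

lemma cnt_eq_zero {r : H → H → Prop} {LA : List H} {l : List H} {c : ℕ}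
    (hl : ∀ e ∈ l, Classed r LA e) (hc : LA.length ≤ c) : cnt r LA l c = 0 := by
  classical
  unfold cnt
  rw [Finset.card_eq_zero, Finset.filter_eq_empty_iff]
  intro i _ hEq
  have h1 := (idxE_spec (hl _ (get_mem' l i))).1
  omega

lemma wordLe_of_cnt_le {r : H → H → Prop} {LA : List H} {l m : List H} (htrans : Transitive r)
    (hl : ∀ e ∈ l, Classed r LA e) (hm : ∀ e ∈ m, Classed r LA e)
    (h : ∀ c, cnt r LA l c ≤ cnt r LA m c) : WordLe r l m := by
  classical
  set Sl : ℕ → Finset (Fin l.length) :=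
    fun c => Finset.univ.filter (fun i => idxE r LA (l.get i) = c) with hSl
  set Sm : ℕ → Finset (Fin m.length) :=
    fun c => Finset.univ.filter (fun i => idxE r LA (m.get i) = c) with hSm
  have hcard : ∀ c, (Sl c).card ≤ (Sm c).card := h
  have hmemSl : ∀ i : Fin l.length, i ∈ Sl (idxE r LA (l.get i)) := by
    intro i; simp [hSl]
  let Φ : (c : ℕ) → {i // i ∈ Sl c} → Fin m.length := fun c p =>
    ((Sm c).equivFin.symm (Fin.castLE (hcard c) ((Sl c).equivFin p))).val
  have hΦinj : ∀ c, Function.Injective (Φ c) := by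
    intro c a b hab
    have h1 : ((Sm c).equivFin.symm (Fin.castLE (hcard c) ((Sl c).equivFin a))) =
        ((Sm c).equivFin.symm (Fin.castLE (hcard c) ((Sl c).equivFin b))) :=
      Subtype.coe_injective hab
    have h2 := (Sm c).equivFin.symm.injective h1
    have h3 := Fin.castLE_injective (hcard c) h2
    exact (Sl c).equivFin.injective h3
  have hΦmem : ∀ c (p : {i // i ∈ Sl c}), Φ c p ∈ Sm c := fun c p =>
    ((Sm c).equivFin.symm (Fin.castLE (hcard c) ((Sl c).equivFin p))).property
  have hΦcast : ∀ (c c' : ℕ) (hcc : c = c') (j : Fin l.length) (hj : j ∈ Sl c'),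
      Φ c' ⟨j, hj⟩ = Φ c ⟨j, hcc ▸ hj⟩ := by
    rintro c c' rfl j hj; rfl
  let σ : Fin l.length → Fin m.length := fun i =>
    Φ (idxE r LA (l.get i)) ⟨i, hmemSl i⟩
  have hσmem : ∀ i : Fin l.length, idxE r LA (m.get (σ i)) = idxE r LA (l.get i) := by
    intro i
    have := hΦmem (idxE r LA (l.get i)) ⟨i, hmemSl i⟩
    simp only [hSm, Finset.mem_filter] at this
    exact this.2
  have hσinj : Function.Injective σ := by
    intro i j hij
    have hc : idxE r LA (l.get i) = idxE r LA (l.get j) := by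
      rw [← hσmem i, ← hσmem j, hij]
    have h4 : σ j = Φ (idxE r LA (l.get i)) ⟨j, hc ▸ hmemSl j⟩ :=
      hΦcast _ _ hc j (hmemSl j)
    have h5 : Φ (idxE r LA (l.get i)) ⟨i, hmemSl i⟩ =
        Φ (idxE r LA (l.get i)) ⟨j, hc ▸ hmemSl j⟩ := by
      rw [← h4]; exact hij
    have := hΦinj _ h5
    exact congrArg Subtype.val this
  refine ⟨⟨σ, hσinj⟩, ?_⟩
  intro i
  simp only [Function.Embedding.coeFn_mk]
  have hcl := hl _ (get_mem' l i)
  have hcm := hm _ (get_mem' m (σ i))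
  have := equiv_of_idxE_eq htrans hcl hcm (hσmem i).symm
  exact this


lemma natSubseq (f : ℕ → ℕ) : ∃ g : ℕ ↪o ℕ, ∀ m n : ℕ, m ≤ n → f (g m) ≤ f (g n) := by
  have h1 : (Set.univ : Set ℕ).IsPWO := (Set.isWF_univ_iff.2 ⟨wellFounded_lt⟩).isPWO
  exact h1.exists_monotone_subseq fun n => Set.mem_univ (f n)

lemma dickson : ∀ (k : ℕ) (f : ℕ → Fin k → ℕ), ∃ m n : ℕ, m < n ∧ ∀ c, f m c ≤ f n c := by
  intro k
  induction k with
  | zero => exact fun f => ⟨0, 1, by norm_num, fun c => c.elim0⟩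
  | succ k ih =>
    intro f
    obtain ⟨g, hg⟩ := natSubseq (fun n => f n 0)
    obtain ⟨m, n, hmn, hc⟩ := ih (fun j c => f (g j) c.succ)
    refine ⟨g m, g n, g.strictMono hmn, ?_⟩
    intro c
    refine Fin.cases ?_ ?_ c
    · exact hg m n hmn.le
    · exact fun c' => hc c'

lemma minimals_finite {k : ℕ} (V : Set (Fin k → ℕ)) :
    {v | v ∈ V ∧ ∀ s ∈ V, s ≤ v → s = v}.Finite := by
  by_contra h
  have hinf : {v | v ∈ V ∧ ∀ s ∈ V, s ≤ v → s = v}.Infinite := h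
  set f := hinf.natEmbedding with hf
  obtain ⟨m, n, hmn, hc⟩ := dickson k (fun j => (f j).val)
  have hle : (f m).val ≤ (f n).val := fun c => hc c
  have heq : (f m).val = (f n).val := (f n).2.2 (f m).val (f m).2.1 hle
  have : f m = f n := Subtype.ext heq
  exact absurd (f.injective this) (Nat.ne_of_lt hmn)

lemma exists_min_vec {k : ℕ} (V : Set (Fin k → ℕ)) (hV : V.Nonempty) :
    ∃ v ∈ V, ∀ s ∈ V, s ≤ v → s = v := by
  classical
  set T : Set ℕ := (fun v => ∑ c, v c) '' V with hT
  have hTne : T.Nonempty := hV.image _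
  obtain ⟨v₀, hv₀, hsum⟩ := Nat.sInf_mem hTne
  refine ⟨v₀, hv₀, ?_⟩
  intro s hs hle
  have h1 : sInf T ≤ ∑ c, s c := Nat.sInf_le ⟨s, hs, rfl⟩
  have h2 : (∑ c, s c) ≤ ∑ c, v₀ c := Finset.sum_le_sum fun c _ => hle c
  funext c
  by_contra hne
  have hlt : s c < v₀ c := lt_of_le_of_ne (hle c) hne
  have h3 : (∑ c, s c) < ∑ c, v₀ c :=
    Finset.sum_lt_sum (fun i _ => hle i) ⟨c, Finset.mem_univ c, hlt⟩
  have h4 : (∑ c, v₀ c) = sInf T := hsum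
  have h5 := lt_of_le_of_lt h1 h3
  rw [h4] at h5
  exact lt_irrefl _ h5


end Aux

section Monoid
variable {H : Type*} [Monoid H] {r : H → H → Prop}

lemma r_one (hwp : WeaklyPositive r) (y : H) : r 1 y := by
  have := hwp.2 1 y 1; simpa using this

lemma runit_of (hwp : WeaklyPositive r) {u : H} (h : r u 1) : RUnit r u := ⟨h, r_one hwp u⟩

lemma nonunit_iff (hwp : WeaklyPositive r) {u : H} : RNonUnit r u ↔ ¬ r u 1 :=
  ⟨fun h h1 => h (runit_of hwp h1), fun h h1 => h h1.1⟩

lemma dvd2_r (hwp : WeaklyPositive r) {y z : H} (h : Dvd2 y z) : r y z := by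
  obtain ⟨u, v, rfl⟩ := h; exact hwp.2 y u v

lemma dvd2_refl (y : H) : Dvd2 y y := ⟨1, 1, by simp⟩

lemma dvd2_trans {a b c : H} (h1 : Dvd2 a b) (h2 : Dvd2 b c) : Dvd2 a c := by
  obtain ⟨u, v, rfl⟩ := h1
  obtain ⟨s, t, rfl⟩ := h2
  exact ⟨s * u, v * t, by simp [mul_assoc]⟩

lemma unit_mul (hwp : WeaklyPositive r) {u v : H} (hu : r u 1) (hv : r v 1) : r (u * v) 1 := by
  have := hwp.1 1 u v (runit_of hwp hu) (runit_of hwp hv)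
  simpa using this

lemma sandwich₁ (hwp : WeaklyPositive r) {u v : H} (hu : r u 1) (hv : r v 1) (a : H) :
    r (u * a * v) a := hwp.1 a u v (runit_of hwp hu) (runit_of hwp hv)

lemma prod_mem_dvd2 {g : List H} {w : H} (hw : w ∈ g) : Dvd2 w g.prod := by
  obtain ⟨s, t, rfl⟩ := List.append_of_mem hw
  exact ⟨s.prod, t.prod, by simp [List.prod_append, List.prod_cons, mul_assoc]⟩

/-- concatenating factorizations -/
lemma concat_facs {r : H → H → Prop} (g : List H)
    (h : ∀ w ∈ g, ∃ lw : List H, lw ≠ [] ∧ (∀ e ∈ lw, RIrred r e) ∧ lw.prod = w) :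
    ∃ L : List H, (∀ e ∈ L, RIrred r e) ∧ L.prod = g.prod ∧ (g ≠ [] → L ≠ []) := by
  induction g with
  | nil => exact ⟨[], by simp, by simp, by simp⟩
  | cons w t ih =>
    obtain ⟨lw, hne, hirr, hprod⟩ := h w List.mem_cons_self
    obtain ⟨L, hL1, hL2, _⟩ := ih fun w' hw' => h w' (List.mem_cons_of_mem _ hw')
    refine ⟨lw ++ L, ?_, ?_, ?_⟩
    · intro e he
      rcases List.mem_append.1 he with h' | h'
      · exact hirr e h'
      · exact hL1 e h'
    · rw [List.prod_append, hprod, hL2, List.prod_cons]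
    · intro _
      simp [List.append_eq_nil_iff]
      intro h'
      exact absurd h' hne

end Monoid

section Core
variable {H : Type*} [Monoid H] {r : H → H → Prop}

lemma germ_pack (hrefl : Reflexive r) (htrans : Transitive r) (hwp : WeaklyPositive r)
    (hia : ∀ a : H, RIrred r a → RAtom r a) (x : H) (hx : RNonUnit r x)
    (hfgu : IsFGU (SubRel r (GermSub x))) :
    ∃ LA : List H, (∃ l, IsFac r x l) ∧ ∀ l, IsFac r x l → ∀ e ∈ l, Classed r LA e := by
  classical
  obtain ⟨A, hAfin, hAtop⟩ := hfgu
  set A₀ : Set H := Subtype.val '' A with hA₀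
  have hA₀fin : A₀.Finite := hAfin.image _
  set W : Set H := {w | ∃ u a v : H, r u 1 ∧ a ∈ A₀ ∧ r v 1 ∧ w = u * a * v} with hWdef
  have hxn : ¬ r x 1 := fun h => hx (runit_of hwp h)
  have hW_equiv : ∀ w ∈ W, ∃ a ∈ A₀, r w a ∧ r a w := by
    rintro w ⟨u, a, v, hu, ha, hv, rfl⟩
    exact ⟨a, ha, sandwich₁ hwp hu hv a, hwp.2 a u v⟩
  -- G1 : every divisor of x is a product of elements of W
  have hG1 : ∀ y : H, Dvd2 y x → ∃ L : List H, (∀ w ∈ L, w ∈ W) ∧ L.prod = y := by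
    intro y hy
    have hyK : y ∈ GermSub x := Submonoid.subset_closure hy
    have hmem : (⟨y, hyK⟩ : GermSub x) ∈ Submonoid.closure
        {w : GermSub x | ∃ u a v : GermSub x, RUnit (SubRel r (GermSub x)) u ∧ a ∈ A ∧
          RUnit (SubRel r (GermSub x)) v ∧ w = u * a * v} := by
      rw [hAtop]; exact Submonoid.mem_top _
    obtain ⟨lK, hlK, hprod⟩ := Submonoid.exists_list_of_mem_closure hmem
    refine ⟨lK.map Subtype.val, ?_, ?_⟩
    · intro w hw
      obtain ⟨wK, hwK, rfl⟩ := List.mem_map.1 hw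
      obtain ⟨u, a, v, hu, ha, hv, hwEq⟩ := hlK wK hwK
      refine ⟨u.val, a.val, v.val, by simpa [SubRel] using hu.1, ⟨a, ha, rfl⟩, by simpa [SubRel] using hv.1, ?_⟩
      rw [hwEq]; rfl
    · rw [← Submonoid.coe_list_prod, hprod]
  -- G2 : merge units
  have hG2 : ∀ L : List H, (∀ w ∈ L, w ∈ W) → ¬ r L.prod 1 →
      ∃ g : List H, g ≠ [] ∧ (∀ w ∈ g, w ∈ W ∧ ¬ r w 1) ∧ g.prod = L.prod := by
    intro L
    induction L with
    | nil => intro _ h; exact absurd (hrefl 1) (by simpa using h)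
    | cons w t ih =>
      intro hmem hnu
      have hwW := hmem w List.mem_cons_self
      have htW : ∀ w' ∈ t, w' ∈ W := fun w' h => hmem w' (List.mem_cons_of_mem _ h)
      by_cases hw : r w 1
      · have ht : ¬ r t.prod 1 := fun h => hnu (by rw [List.prod_cons]; exact unit_mul hwp hw h)
        obtain ⟨g, gne, gprop, gprod⟩ := ih htW ht
        cases g with
        | nil => exact absurd rfl gne
        | cons h' rest =>
          obtain ⟨⟨u, a, v, hu, ha, hv, hEq⟩, hnu'⟩ := gprop h' List.mem_cons_self
          have hEq2 : (w*u)*a*v = w*h' := by rw [hEq]; simp [mul_assoc]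
          refine ⟨((w*u)*a*v) :: rest, by simp, ?_, ?_⟩
          · intro w' hw'
            rcases List.mem_cons.1 hw' with rfl | h''
            · refine ⟨⟨w*u, a, v, unit_mul hwp hw hu, ha, hv, rfl⟩, ?_⟩
              intro hcon
              have hh : r h' ((w*u)*a*v) := by
                rw [hEq2]
                have := hwp.2 h' w 1; simpa using this
              exact hnu' (htrans hh hcon)
            · exact gprop w' (List.mem_cons_of_mem _ h'')
          · rw [List.prod_cons, List.prod_cons, ← gprod, List.prod_cons, hEq2, mul_assoc]
      · by_cases hp : r t.prod 1
        · obtain ⟨u, a, v, hu, ha, hv, hEq⟩ := hwW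
          refine ⟨[w * t.prod], by simp, ?_, by simp [List.prod_cons]⟩
          intro w' hw'
          rw [List.mem_singleton] at hw'
          subst hw'
          refine ⟨⟨u, a, v*t.prod, hu, ha, unit_mul hwp hv hp, by rw [hEq]; simp [mul_assoc]⟩, ?_⟩
          intro hcon
          apply hw
          have hh : r w (w*t.prod) := by have := hwp.2 w 1 t.prod; simpa using this
          exact htrans hh hcon
        · obtain ⟨g, gne, gprop, gprod⟩ := ih htW hp
          refine ⟨w :: g, by simp, ?_, by rw [List.prod_cons, List.prod_cons, gprod]⟩
          intro w' hw'
          rcases List.mem_cons.1 hw' with rfl | h''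
          · exact ⟨hwW, hw⟩
          · exact gprop w' h''
  -- well-foundedness of ≺ on elements equivalent to A₀
  set T : H → H → Prop := fun z y => (∃ a ∈ A₀, r z a ∧ r a z) ∧ RLt r z y with hTdef
  have hWF : WellFounded T := by
    haveI : IsIrrefl H T := ⟨fun a ha => ha.2.2 (hrefl a)⟩
    haveI : IsTrans H T :=
      ⟨fun a b c hab hbc => ⟨hab.1, htrans hab.2.1 hbc.2.1,
        fun hca => hbc.2.2 (htrans hca hab.2.1)⟩⟩
    haveI : IsStrictOrder H T := {}
    rw [RelEmbedding.wellFounded_iff_isEmpty]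
    by_contra hcon
    rw [not_isEmpty_iff] at hcon
    obtain ⟨f⟩ := hcon
    have hstep : ∀ n : ℕ, T (f (n+1)) (f n) := fun n => f.map_rel_iff.2 (Nat.lt_succ_self n)
    have chain : ∀ j i : ℕ, i ≤ j → r (f j) (f i) := by
      intro j
      induction j with
      | zero =>
        intro i hi
        have : i = 0 := Nat.le_zero.1 hi
        subst this; exact hrefl _
      | succ j ihj =>
        intro i hi
        rcases Nat.eq_or_lt_of_le hi with h | hlt
        · rw [← h]; exact hrefl _
        · exact htrans (hstep j).2.1 (ihj i (Nat.lt_succ_iff.1 hlt))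
    haveI : Finite ↥A₀ := hA₀fin.to_subtype
    choose aw haw using fun n => (hstep n).1
    obtain ⟨m, n, hne, heq⟩ := Finite.exists_ne_map_eq_of_infinite
      (fun n : ℕ => (⟨aw n, (haw n).1⟩ : A₀))
    have key : ∀ m n : ℕ, m < n → aw m = aw n → False := by
      intro m n hmn hawEq
      have h1 : r (f (m+1)) (f (n+1)) :=
        htrans (haw m).2.1 (by rw [hawEq]; exact (haw n).2.2)
      have h2 : r (f (n+1)) (f (m+2)) := chain (n+1) (m+2) (by omega)
      exact (hstep (m+1)).2.2 (htrans h1 h2)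
    rcases lt_or_gt_of_ne hne with h | h
    · exact key m n h (congrArg Subtype.val heq)
    · exact key n m h (congrArg Subtype.val heq).symm
  -- main recursion: every nonunit divisor of x has a factorization
  have hP : ∀ z : H, Dvd2 z x → ¬ r z 1 →
      ∃ l : List H, l ≠ [] ∧ (∀ e ∈ l, RIrred r e) ∧ l.prod = z := by
    intro z
    refine hWF.induction
      (C := fun z => Dvd2 z x → ¬ r z 1 →
        ∃ l : List H, l ≠ [] ∧ (∀ e ∈ l, RIrred r e) ∧ l.prod = z) z ?_
    clear z
    intro z IH hdvd hnu
    by_cases hirr : RIrred r z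
    · refine ⟨[z], by simp, ?_, by simp⟩
      intro e he
      rw [List.mem_singleton] at he
      subst he; exact hirr
    · have hznon : RNonUnit r z := (nonunit_iff hwp).2 hnu
      have hex : ∃ p q : H, RNonUnit r p ∧ RNonUnit r q ∧ RLt r p z ∧ RLt r q z ∧ z = p * q := by
        by_contra hcon
        push_neg at hcon
        exact hirr ⟨hznon, fun y w hy hw h1 h2 => hcon y w hy hw h1 h2⟩
      obtain ⟨p, q, hpn, hqn, hpl, hql, hzpq⟩ := hex
      have hsub : ∀ d : H, Dvd2 d x → ¬ r d 1 → RLt r d z →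
          ∃ l : List H, l ≠ [] ∧ (∀ e ∈ l, RIrred r e) ∧ l.prod = d := by
        intro d hdx hdn hdlt
        obtain ⟨L, hLW, hLprod⟩ := hG1 d hdx
        obtain ⟨g, gne, gprop, gprod⟩ := hG2 L hLW (by rw [hLprod]; exact hdn)
        rw [hLprod] at gprod
        have hrec : ∀ w ∈ g, ∃ lw : List H, lw ≠ [] ∧ (∀ e ∈ lw, RIrred r e) ∧ lw.prod = w := by
          intro w hw
          have hwW := (gprop w hw).1
          have hwnu := (gprop w hw).2
          have hwdvdd : Dvd2 w d := by rw [← gprod]; exact prod_mem_dvd2 hw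
          have hwd : r w d := dvd2_r hwp hwdvdd
          refine IH w ⟨hW_equiv w hwW, htrans hwd hdlt.1, fun hc => hdlt.2 (htrans hc hwd)⟩
            (dvd2_trans hwdvdd hdx) hwnu
        obtain ⟨Lw, hLw1, hLw2, hLw3⟩ := concat_facs g hrec
        exact ⟨Lw, hLw3 gne, hLw1, by rw [hLw2, gprod]⟩
      have hpd : Dvd2 p x := dvd2_trans ⟨1, q, by simp [hzpq]⟩ hdvd
      have hqd : Dvd2 q x := dvd2_trans ⟨p, 1, by simp [hzpq, mul_assoc]⟩ hdvd
      obtain ⟨Lp, hLp1, hLp2, hLp3⟩ := hsub p hpd ((nonunit_iff hwp).1 hpn) hpl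
      obtain ⟨Lq, hLq1, hLq2, hLq3⟩ := hsub q hqd ((nonunit_iff hwp).1 hqn) hql
      refine ⟨Lp ++ Lq, fun h => hLq1 (List.append_eq_nil_iff.1 h).2, ?_,
        by rw [List.prod_append, hLp3, hLq3, hzpq]⟩
      intro e he
      rcases List.mem_append.1 he with h' | h'
      · exact hLp2 e h'
      · exact hLq2 e h'
  -- a factorization of x exists
  have hfacx : ∃ l : List H, IsFac r x l := by
    obtain ⟨L, hLW, hLprod⟩ := hG1 x (dvd2_refl x)
    obtain ⟨g, gne, gprop, gprod⟩ := hG2 L hLW (by rw [hLprod]; exact hxn)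
    rw [hLprod] at gprod
    have hrec : ∀ w ∈ g, ∃ lw : List H, lw ≠ [] ∧ (∀ e ∈ lw, RIrred r e) ∧ lw.prod = w := by
      intro w hw
      exact hP w (by rw [← gprod]; exact dvd2_trans (prod_mem_dvd2 hw) (dvd2_refl _))
        ((gprop w hw).2)
    obtain ⟨Lw, h1, h2, _⟩ := concat_facs g hrec
    exact ⟨Lw, h1, by rw [h2, gprod]⟩
  -- CR lemma : atoms that are products of W-elements are classed
  have hCR : ∀ (L : List H) (u e : H), RAtom r e → r u 1 → e = u * L.prod →
      (∀ w ∈ L, w ∈ W) → ∃ a ∈ A₀, r e a ∧ r a e := by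
    intro L
    induction L with
    | nil =>
      intro u e hat hu hEq _
      exfalso
      apply (nonunit_iff hwp).1 hat.1
      rw [hEq, List.prod_nil, mul_one]; exact hu
    | cons w t ihL =>
      intro u e hat hu hEq hmem
      obtain ⟨u', a, v', hu', ha, hv', hwEq⟩ := hmem w List.mem_cons_self
      by_cases hp : r t.prod 1
      · have hEq2 : e = (u*u')*a*(v'*t.prod) := by
          rw [hEq, List.prod_cons, hwEq]; simp [mul_assoc]
        refine ⟨a, ha, ?_, ?_⟩
        · rw [hEq2]; exact sandwich₁ hwp (unit_mul hwp hu hu') (unit_mul hwp hv' hp) a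
        · rw [hEq2]; exact hwp.2 a (u*u') (v'*t.prod)
      · have huw : r (u*w) 1 := by
          by_contra huw
          have hEq3 : e = (u*w) * t.prod := by rw [hEq, List.prod_cons, mul_assoc]
          exact hat.2 (u*w) t.prod ((nonunit_iff hwp).2 huw) ((nonunit_iff hwp).2 hp) hEq3
        exact ihL (u*w) e hat huw (by rw [hEq, List.prod_cons, mul_assoc])
          (fun w' hw' => hmem w' (List.mem_cons_of_mem _ hw'))
  -- assemble
  refine ⟨hA₀fin.toFinset.toList, hfacx, ?_⟩
  intro l hl e he
  have hirr := hl.1 e he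
  have hat := hia e hirr
  have hedvd : Dvd2 e x := by rw [← hl.2]; exact prod_mem_dvd2 he
  obtain ⟨L, hLW, hLprod⟩ := hG1 e hedvd
  obtain ⟨a, ha, h1, h2⟩ := hCR L 1 e hat (hrefl 1) (by rw [hLprod, one_mul]) hLW
  have haLA : a ∈ hA₀fin.toFinset.toList := by
    rw [Finset.mem_toList, Set.Finite.mem_toFinset]; exact ha
  obtain ⟨i, hi, hEq⟩ := List.getElem_of_mem haLA
  refine ⟨i, hi, ?_, ?_⟩
  · rw [List.getD_eq_getElem _ _ hi, hEq]; exact h1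
  · rw [List.getD_eq_getElem _ _ hi, hEq]; exact h2

end Core

section Final
variable {H : Type*} [Monoid H] {r : H → H → Prop}

lemma wordEquiv_map (htrans : Transitive r) {l : List H} {g : H → H}
    (hg : ∀ e ∈ l, r e (g e) ∧ r (g e) e) : WordEquiv r l (l.map g) := by
  have hlen : (l.map g).length = l.length := l.length_map g
  constructor
  · refine ⟨(finCongr hlen.symm).toEmbedding, ?_⟩
    intro i
    simp only [Equiv.coe_toEmbedding]
    have h1 : (l.map g).get ((finCongr hlen.symm) i) = g (l.get i) := by
      simp [List.get_eq_getElem, List.getElem_map]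
    rw [h1]
    exact hg _ (get_mem' l i)
  · refine ⟨(finCongr hlen).toEmbedding, ?_⟩
    intro i
    simp only [Equiv.coe_toEmbedding]
    have h1 : (l.map g).get i = g (l.get ((finCongr hlen) i)) := by
      simp [List.get_eq_getElem, List.getElem_map]
    rw [h1]
    exact ⟨(hg _ (get_mem' l _)).2, (hg _ (get_mem' l _)).1⟩

lemma main_at (hrefl : Reflexive r) (htrans : Transitive r) (hwp : WeaklyPositive r)
    (hia : ∀ a : H, RIrred r a → RAtom r a) (x : H) (hx : RNonUnit r x)
    (hfgu : IsFGU (SubRel r (GermSub x))) :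
    (∃ A : Set H, A.Finite ∧ A ⊆ {a : H | RIrred r a} ∧
      ∀ l : List H, IsFac r x l → ∃ m : List H, (∀ a ∈ m, a ∈ A) ∧ WordEquiv r l m) ∧
    ((∃ l : List H, IsMinAtomicFac r x l) ∧
      ∃ F : Set (List H), F.Finite ∧
        ∀ l : List H, IsMinAtomicFac r x l → ∃ m ∈ F, IsMinAtomicFac r x m ∧ WordEquiv r l m) := by
  classical
  obtain ⟨LA, hfac, hclass⟩ := germ_pack hrefl htrans hwp hia x hx hfgu
  -- ===== loft part =====
  set rep : ℕ → H := fun c =>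
    if h : ∃ e, RIrred r e ∧ r e (LA.getD c 1) ∧ r (LA.getD c 1) e then h.choose else 1
    with hrep
  have hrepIrr : ∀ c (h : ∃ e, RIrred r e ∧ r e (LA.getD c 1) ∧ r (LA.getD c 1) e),
      RIrred r (rep c) ∧ r (rep c) (LA.getD c 1) ∧ r (LA.getD c 1) (rep c) := by
    intro c h
    rw [hrep]; simp only; rw [dif_pos h]
    exact h.choose_spec
  have hloft : ∃ A : Set H, A.Finite ∧ A ⊆ {a : H | RIrred r a} ∧
      ∀ l : List H, IsFac r x l → ∃ m : List H, (∀ a ∈ m, a ∈ A) ∧ WordEquiv r l m := by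
    refine ⟨rep '' {c | c < LA.length ∧
        ∃ e, RIrred r e ∧ r e (LA.getD c 1) ∧ r (LA.getD c 1) e}, ?_, ?_, ?_⟩
    · exact ((Set.finite_Iio LA.length).subset (fun c hc => hc.1)).image rep
    · rintro a ⟨c, hc, rfl⟩
      exact (hrepIrr c hc.2).1
    · intro l hl
      refine ⟨l.map (fun e => rep (idxE r LA e)), ?_, ?_⟩
      · intro a ha'
        obtain ⟨e, he, rfl⟩ := List.mem_map.1 ha'
        have hcl := hclass l hl e he
        obtain ⟨hlt, h1, h2⟩ := idxE_spec hcl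
        exact ⟨idxE r LA e, ⟨hlt, ⟨e, hl.1 e he, h1, h2⟩⟩, rfl⟩
      · apply wordEquiv_map htrans
        intro e he
        have hcl := hclass l hl e he
        obtain ⟨hlt, h1, h2⟩ := idxE_spec hcl
        obtain ⟨hIrr, hr1, hr2⟩ := hrepIrr _ ⟨e, hl.1 e he, h1, h2⟩
        exact ⟨htrans h1 hr2, htrans hr1 h2⟩
  -- ===== FmF part =====
  set k := LA.length with hk
  set vec : List H → (Fin k → ℕ) := fun L c => cnt r LA L c.val with hvec
  set V : Set (Fin k → ℕ) := {v | ∃ l, IsFac r x l ∧ vec l = v} with hV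
  have hVne : V.Nonempty := by
    obtain ⟨l, hl⟩ := hfac
    exact ⟨vec l, l, hl, rfl⟩
  have hbridge : ∀ {l m : List H}, (∀ e ∈ l, Classed r LA e) → (∀ e ∈ m, Classed r LA e) →
      vec l ≤ vec m → ∀ c, cnt r LA l c ≤ cnt r LA m c := by
    intro l m hcl hcm hle c
    by_cases hck : c < k
    · exact hle ⟨c, hck⟩
    · rw [cnt_eq_zero hcl (le_of_not_gt hck)]
      exact Nat.zero_le _
  have hminfac : ∀ l, IsFac r x l → (∀ s ∈ V, s ≤ vec l → s = vec l) → IsMinFac r x l := by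
    intro l hl hmin
    refine ⟨hl, ?_⟩
    intro m hm hml
    have hcm := hclass m hm
    have hcl := hclass l hl
    have h1 : ∀ c, cnt r LA m c ≤ cnt r LA l c := cnt_le_of_wordLe htrans hcm hml
    have h3 : vec m = vec l := hmin (vec m) ⟨m, hm, rfl⟩ (fun c => h1 c.val)
    apply wordLe_of_cnt_le htrans hcl hcm
    intro c
    by_cases hck : c < k
    · exact le_of_eq (congrFun h3.symm ⟨c, hck⟩)
    · rw [cnt_eq_zero hcl (le_of_not_gt hck), cnt_eq_zero hcm (le_of_not_gt hck)]
  have hminatom : ∀ l, IsMinFac r x l → IsMinAtomicFac r x l :=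
    fun l h => ⟨h, fun a ha => hia a (h.1.1 a ha)⟩
  obtain ⟨v₀, hv₀V, hv₀min⟩ := exists_min_vec V hVne
  obtain ⟨l₀, hl₀, hvl₀⟩ := hv₀V
  have existsMin : ∃ l, IsMinAtomicFac r x l :=
    ⟨l₀, hminatom _ (hminfac l₀ hl₀ (by rw [hvl₀]; exact hv₀min))⟩
  set Vmin : Set (Fin k → ℕ) := {v | v ∈ V ∧ ∀ s ∈ V, s ≤ v → s = v} with hVmin
  have hVminfin : Vmin.Finite := minimals_finite V
  set pick : (Fin k → ℕ) → List H := fun v =>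
    if h : ∃ l, IsFac r x l ∧ vec l = v then h.choose else [] with hpick
  have hpickspec : ∀ (v : Fin k → ℕ) (hv : ∃ l, IsFac r x l ∧ vec l = v),
      IsFac r x (pick v) ∧ vec (pick v) = v := by
    intro v hv
    rw [hpick]; simp only; rw [dif_pos hv]
    exact hv.choose_spec
  refine ⟨hloft, existsMin, pick '' Vmin, hVminfin.image _, ?_⟩
  intro l hl
  have hlfac : IsFac r x l := hl.1.1
  have hcl := hclass l hlfac
  have hlVmin : vec l ∈ Vmin := by
    refine ⟨⟨l, hlfac, rfl⟩, ?_⟩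
    intro s hs hsle
    obtain ⟨m, hm, rfl⟩ := hs
    have hcm := hclass m hm
    have hml : WordLe r m l := wordLe_of_cnt_le htrans hcm hcl (hbridge hcm hcl hsle)
    have hlm : WordLe r l m := hl.1.2 m hm hml
    have h2 : vec l ≤ vec m := fun c => cnt_le_of_wordLe htrans hcl hlm c.val
    exact le_antisymm hsle h2
  have hmV := hpickspec (vec l) hlVmin.1
  have hmfac := hmV.1
  have hcm := hclass _ hmfac
  have hvm : vec (pick (vec l)) = vec l := hmV.2
  have hcnt_eq : ∀ c, cnt r LA l c = cnt r LA (pick (vec l)) c := by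
    intro c
    by_cases hck : c < k
    · exact (congrFun hvm ⟨c, hck⟩).symm
    · rw [cnt_eq_zero hcl (le_of_not_gt hck), cnt_eq_zero hcm (le_of_not_gt hck)]
  have hWE : WordEquiv r l (pick (vec l)) :=
    ⟨wordLe_of_cnt_le htrans hcl hcm (fun c => le_of_eq (hcnt_eq c)),
      wordLe_of_cnt_le htrans hcm hcl (fun c => le_of_eq (hcnt_eq c).symm)⟩
  have hmmin : IsMinAtomicFac r x (pick (vec l)) := by
    apply hminatom
    apply hminfac _ hmfac
    rw [hvm]
    exact hlVmin.2
  exact ⟨pick (vec l), ⟨vec l, hlVmin, rfl⟩, hmmin, hWE⟩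

end Final


/-- Theorem 4.12. Every weakly l.f.g.u. weakly positive monoid
`(H, ≼)` in which every `≼`-irreducible is a `≼`-atom, is loft and hence FmF-atomic. -/
theorem stmt12 {H : Type*} [Monoid H] (r : H → H → Prop)
    (hrefl : Reflexive r) (htrans : Transitive r)
    (hwp : WeaklyPositive r)
    (hwlfgu : ∀ x : H, RNonUnit r x → IsFGU (SubRel r (GermSub x)))
    (hia : ∀ a : H, RIrred r a → RAtom r a) :
    IsLoft r ∧ IsFmFAtomic r := by
  constructor
  · intro x hx
    exact (main_at hrefl htrans hwp hia x hx (hwlfgu x hx)).1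
  · intro x hx
    exact (main_at hrefl htrans hwp hia x hx (hwlfgu x hx)).2

end FactPaper
end

section
/- Every weakly l.f.g.u. strongly positive monoid is FF-atomic: if 𝓗 = (H, ≼) is a strongly positive monoid whose germ at every ≼-non-unit is f.g.u., then for every ≼-non-unit x the set of atomic ≼-factorizations of x, modulo ⊑_𝓗-equivalence, is finite and non-empty. -/
open Pointwise

namespace FactPaper

section Aux

variable {H : Type*} [Monoid H] {r : H → H → Prop}

private lemma aux_le_mul_left (hmul : ∀ x y u v : H, r x y → r (u * x * v) (u * y * v))
    (hpos : ∀ x : H, r 1 x) (u z : H) : r z (u * z) := by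
  have h := hmul 1 u 1 z (hpos u); simpa using h

private lemma aux_le_mul_right (hmul : ∀ x y u v : H, r x y → r (u * x * v) (u * y * v))
    (hpos : ∀ x : H, r 1 x) (z v : H) : r z (z * v) := by
  have h := hmul 1 v z 1 (hpos v); simpa using h

private lemma aux_mul_left_le (hmul : ∀ x y u v : H, r x y → r (u * x * v) (u * y * v))
    {u : H} (hu : r u 1) (z : H) : r (u * z) z := by
  have h := hmul u 1 1 z hu; simpa using h

private lemma aux_mul_right_le (hmul : ∀ x y u v : H, r x y → r (u * x * v) (u * y * v))
    {v : H} (hv : r v 1) (z : H) : r (z * v) z := by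
  have h := hmul v 1 z 1 hv; simpa using h

private lemma aux_mul_congr (htrans : Transitive r)
    (hmul : ∀ x y u v : H, r x y → r (u * x * v) (u * y * v))
    {a b c d : H} (h1 : r a b) (h2 : r c d) : r (a * c) (b * d) := by
  have i1 := hmul a b 1 c h1
  have i2 := hmul c d b 1 h2
  simp only [one_mul, mul_one] at i1 i2
  exact htrans i1 i2

private lemma aux_unit_mul (htrans : Transitive r)
    (hmul : ∀ x y u v : H, r x y → r (u * x * v) (u * y * v))
    {u v : H} (hu : r u 1) (hv : r v 1) : r (u * v) 1 :=
  htrans (aux_mul_left_le hmul hu v) hv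

private lemma aux_rlt_of_r_of_rlt (htrans : Transitive r) {a b c : H}
    (h1 : r a b) (h2 : RLt r b c) : RLt r a c :=
  ⟨htrans h1 h2.1, fun h => h2.2 (htrans h h1)⟩

private lemma aux_sublist_le (hrefl : Reflexive r) (htrans : Transitive r)
    (hmul : ∀ x y u v : H, r x y → r (u * x * v) (u * y * v))
    (hpos : ∀ x : H, r 1 x) {w w' : List H} (h : List.Sublist w w') :
    r w.prod w'.prod := by
  induction h with
  | slnil => exact hrefl 1
  | cons a h ih =>
      rw [List.prod_cons]
      exact htrans ih (aux_le_mul_left hmul hpos a _)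
  | cons_cons a h ih =>
      rw [List.prod_cons, List.prod_cons]
      exact aux_mul_congr htrans hmul (hrefl a) ih

private lemma aux_sublist_rlt (hrefl : Reflexive r) (htrans : Transitive r)
    (hmul : ∀ x y u v : H, r x y → r (u * x * v) (u * y * v))
    (hsmul : ∀ x y u v : H, RLt r x y → RLt r (u * x * v) (u * y * v))
    (hpos : ∀ x : H, r 1 x) {w w' : List H} (h : List.Sublist w w') :
    (∀ b ∈ w', ¬ r b 1) → w.length < w'.length → RLt r w.prod w'.prod := by
  induction h with
  | slnil => intro _ hlen; simp at hlen
  | @cons l₁ l₂ a h ih =>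
      intro hnu _
      rw [List.prod_cons]
      have h1 : r l₁.prod l₂.prod := aux_sublist_le hrefl htrans hmul hpos h
      have h2 : RLt r l₂.prod (a * l₂.prod) := by
        have h3 := hsmul 1 a 1 l₂.prod ⟨hpos a, hnu a (by simp)⟩
        simpa using h3
      exact aux_rlt_of_r_of_rlt htrans h1 h2
  | cons_cons a h ih =>
      intro hnu hlen
      rw [List.prod_cons, List.prod_cons]
      have h4 := ih (fun b hb => hnu b (by simp [hb])) (by simpa using hlen)
      have h5 := hsmul _ _ a 1 h4
      simpa using h5

end Aux

/-- Corollary 4.13. Every weakly l.f.g.u. strongly positive monoid is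
FF-atomic: if `(H, ≼)` is a preordered monoid whose strict part is compatible with
multiplication, with `1 ≼ x` for all `x`, and whose germ at every `≼`-non-unit is
f.g.u., then for every `≼`-non-unit `x` the set of atomic `≼`-factorizations of `x`,
modulo `⊑`-equivalence, is finite and non-empty. -/
theorem stmt13 {H : Type*} [Monoid H] (r : H → H → Prop)
    (hrefl : Reflexive r) (htrans : Transitive r)
    (hmul : ∀ x y u v : H, r x y → r (u * x * v) (u * y * v))
    (hsmul : ∀ x y u v : H, RLt r x y → RLt r (u * x * v) (u * y * v))
    (hpos : ∀ x : H, r 1 x)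
    (hwlfgu : ∀ x : H, RNonUnit r x → IsFGU (SubRel r (GermSub x))) :
    IsFFAtomic r := by
  classical
  intro x hx
  have hx1 : ¬ r x 1 := fun h => hx ⟨h, hpos x⟩
  set K := GermSub x with hK
  obtain ⟨A, hAfin, hAtop⟩ := hwlfgu x hx
  set A' : Set H := (fun a : ↥K => (a : H)) '' {a : ↥K | a ∈ A ∧ ¬ r (a : H) 1} with hA'def
  have hA'fin : A'.Finite := (hAfin.subset (fun a ha => ha.1)).image _
  have hA'nu : ∀ b ∈ A', ¬ r b 1 := by
    rintro b ⟨a, ⟨-, ha⟩, rfl⟩; exact ha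
  -- every divisor of x is a product of a list of "good" elements
  have hdecomp : ∀ y : H, Dvd2 y x → ∃ L : List H,
      (∀ g ∈ L, r g 1 ∨ ∃ a ∈ A', ¬ r g 1 ∧ r g a ∧ r a g) ∧ L.prod = y := by
    intro y hy
    have hyK : y ∈ K := Submonoid.subset_closure hy
    have hmem : (⟨y, hyK⟩ : ↥K) ∈ Submonoid.closure
        {w : ↥K | ∃ u a v : ↥K, RUnit (SubRel r K) u ∧ a ∈ A ∧ RUnit (SubRel r K) v ∧
          w = u * a * v} := by
      rw [hAtop]; exact Submonoid.mem_top _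
    obtain ⟨L0, hL0mem, hL0prod⟩ := Submonoid.exists_list_of_mem_closure hmem
    refine ⟨L0.map (fun g : ↥K => (g : H)), ?_, ?_⟩
    · intro g hg
      obtain ⟨g0, hg0, rfl⟩ := List.mem_map.mp hg
      obtain ⟨u, a, v, hu, haA, hv, hguav⟩ := hL0mem g0 hg0
      have hu1 : r (u : H) 1 := hu.1
      have hv1 : r (v : H) 1 := hv.1
      have hco : (g0 : H) = (u : H) * (a : H) * (v : H) := by rw [hguav]; rfl
      rw [hco]
      by_cases ha1 : r (a : H) 1
      · exact Or.inl (aux_unit_mul htrans hmul (aux_unit_mul htrans hmul hu1 ha1) hv1)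
      · have hale : r (a : H) ((u : H) * (a : H) * (v : H)) := by
          rw [mul_assoc]
          exact htrans (aux_le_mul_right hmul hpos (a : H) (v : H))
            (aux_le_mul_left hmul hpos (u : H) _)
        refine Or.inr ⟨(a : H), ⟨a, ⟨haA, ha1⟩, rfl⟩, ?_, ?_, hale⟩
        · exact fun hg1 => ha1 (htrans hale hg1)
        · rw [mul_assoc]
          exact htrans (aux_mul_left_le hmul hu1 _) (aux_mul_right_le hmul hv1 _)
    · have h1 : ((L0.prod : ↥K) : H) = (L0.map (fun g : ↥K => (g : H))).prod :=
        Submonoid.coe_list_prod K L0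
      rw [← h1, hL0prod]
  -- representing words over A'
  have hrep : ∀ L : List H, (∀ g ∈ L, r g 1 ∨ ∃ a ∈ A', ¬ r g 1 ∧ r g a ∧ r a g) →
      ∃ w : List H, (∀ b ∈ w, b ∈ A') ∧ r L.prod w.prod ∧ r w.prod L.prod := by
    intro L
    induction L with
    | nil =>
        intro _
        exact ⟨[], by simp, hrefl _, hrefl _⟩
    | cons g t ih =>
        intro hL
        obtain ⟨w', hw'A, h1, h2⟩ := ih (fun b hb => hL b (by simp [hb]))
        rcases hL g (by simp) with hg | ⟨a, haA, hgnu, hga, hag⟩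
        · refine ⟨w', hw'A, ?_, ?_⟩
          · rw [List.prod_cons]
            exact htrans (aux_mul_left_le hmul hg t.prod) h1
          · rw [List.prod_cons]
            exact htrans h2 (aux_le_mul_left hmul hpos g t.prod)
        · refine ⟨a :: w', ?_, ?_, ?_⟩
          · intro b hb
            rcases List.mem_cons.mp hb with rfl | hb
            · exact haA
            · exact hw'A b hb
          · rw [List.prod_cons, List.prod_cons]
            exact aux_mul_congr htrans hmul hga h1
          · rw [List.prod_cons, List.prod_cons]
            exact aux_mul_congr htrans hmul hag h2
  -- concatenation of representing words
  have hconcat : ∀ l : List H,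
      (∀ y ∈ l, ¬ r y 1 ∧ ∃ w : List H, (∀ b ∈ w, b ∈ A') ∧ r y w.prod ∧ r w.prod y) →
      ∃ W : List H, (∀ b ∈ W, b ∈ A') ∧ r l.prod W.prod ∧ r W.prod l.prod ∧
        l.length ≤ W.length := by
    intro l
    induction l with
    | nil => intro _; exact ⟨[], by simp, hrefl _, hrefl _, le_refl _⟩
    | cons y t ih =>
        intro hl
        obtain ⟨W', hW'A, hW1, hW2, hW3⟩ := ih (fun z hz => hl z (by simp [hz]))
        obtain ⟨hynu, w, hwA, hw1, hw2⟩ := hl y (by simp)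
        have hwne : w ≠ [] := by
          rintro rfl
          exact hynu (by simpa using hw1)
        refine ⟨w ++ W', ?_, ?_, ?_, ?_⟩
        · intro b hb
          rcases List.mem_append.mp hb with hb | hb
          · exact hwA b hb
          · exact hW'A b hb
        · rw [List.prod_cons, List.prod_append]
          exact aux_mul_congr htrans hmul hw1 hW1
        · rw [List.prod_cons, List.prod_append]
          exact aux_mul_congr htrans hmul hw2 hW2
        · rw [List.length_cons, List.length_append]
          have hw1' : 1 ≤ w.length := List.length_pos_iff.mpr hwne
          omega
  -- Higman's lemma: bound on the length of words over A' with product ≈ x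
  have hS : ∃ N : ℕ, ∀ w : List H, (∀ b ∈ w, b ∈ A') → r w.prod x → r x w.prod →
      w.length ≤ N := by
    by_contra hcon
    push_neg at hcon
    choose f hfA hf1 hf2 hflen using hcon
    let g : ℕ → List H := fun n =>
      Nat.rec (motive := fun _ => List H) (f 0) (fun _ prev => f prev.length) n
    have hgmem : ∀ n, (∀ b ∈ g n, b ∈ A') ∧ r (g n).prod x ∧ r x (g n).prod := by
      intro n
      cases n with
      | zero => exact ⟨hfA 0, hf1 0, hf2 0⟩
      | succ k => exact ⟨hfA _, hf1 _, hf2 _⟩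
    have hmono : StrictMono (fun n => (g n).length) := by
      apply strictMono_nat_of_lt_succ
      intro n
      exact hflen (g n).length
    have hpwoA : A'.PartiallyWellOrderedOn (· = · : H → H → Prop) := by
      intro f'
      haveI : Finite ↥A' := hA'fin.to_subtype
      obtain ⟨m, n, hmn, heq⟩ :=
        Finite.exists_ne_map_eq_of_infinite f'
      have heq' : (f' m : H) = f' n := congrArg Subtype.val heq
      rcases lt_or_gt_of_ne hmn with h | h
      · exact ⟨m, n, h, heq'⟩
      · exact ⟨n, m, h, heq'.symm⟩
    haveI : IsRefl H (· = · : H → H → Prop) := ⟨fun _ => rfl⟩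
    haveI : IsTrans H (· = · : H → H → Prop) := ⟨fun _ _ _ h1 h2 => h1.trans h2⟩
    have hpwoL :=
      Set.PartiallyWellOrderedOn.partiallyWellOrderedOn_sublistForall₂
        (· = · : H → H → Prop) hpwoA
    obtain ⟨m, n, hmn, hsub⟩ := hpwoL (fun n => ⟨g n, (hgmem n).1⟩)
    obtain ⟨l', hforall, hsubl⟩ := List.sublistForall₂_iff.mp
      (show List.SublistForall₂ (· = · : H → H → Prop) (g m) (g n) from hsub)
    have hgm : g m = l' := by
      rw [List.forall₂_eq_eq_eq] at hforall; exact hforall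
    rw [← hgm] at hsubl
    have hlt := aux_sublist_rlt hrefl htrans hmul hsmul hpos hsubl
      (fun b hb => hA'nu b ((hgmem n).1 b hb)) (hmono hmn)
    exact hlt.2 (htrans (hgmem n).2.1 (hgmem m).2.2)
  obtain ⟨N, hN⟩ := hS
  -- members of factorizations divide x
  have hdvd_of_mem : ∀ (l : List H) (y : H), l.prod = x → y ∈ l → Dvd2 y x := by
    intro l y hlx hy
    obtain ⟨s, t, rfl⟩ := List.append_of_mem hy
    exact ⟨s.prod, t.prod, by rw [← hlx, List.prod_append, List.prod_cons, mul_assoc]⟩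
  -- length bound on factorizations of x into non-units
  have hbound : ∀ l : List H, (∀ y ∈ l, ¬ r y 1) → l.prod = x → l.length ≤ N := by
    intro l hlnu hlx
    obtain ⟨W, hWA, hW1, hW2, hW3⟩ := hconcat l (fun y hy => by
      obtain ⟨L, hLP, hLy⟩ := hdecomp y (hdvd_of_mem l y hlx hy)
      obtain ⟨w, hwA, hw1, hw2⟩ := hrep L hLP
      rw [hLy] at hw1 hw2
      exact ⟨hlnu y hy, w, hwA, hw1, hw2⟩)
    rw [hlx] at hW1 hW2
    exact le_trans hW3 (hN W hWA hW2 hW1)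
  -- a factorization of maximal length into non-units; its letters are atoms
  set T : ℕ → Prop := fun n =>
    ∃ l : List H, (∀ y ∈ l, ¬ r y 1) ∧ l.prod = x ∧ l.length = n with hTdef
  have hT1 : T 1 := ⟨[x], by
      intro y hy
      rw [List.mem_singleton] at hy
      subst hy; exact hx1, by simp, rfl⟩
  have hTb : ∀ n, T n → n ≤ N := by
    rintro n ⟨l, h1, h2, h3⟩
    exact h3 ▸ hbound l h1 h2
  have h1N : 1 ≤ N := hTb 1 hT1
  have hn0 : T (Nat.findGreatest T N) := Nat.findGreatest_spec h1N hT1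
  obtain ⟨l0, hl0nu, hl0x, hl0len⟩ := hn0
  have hl0atoms : ∀ y ∈ l0, RAtom r y := by
    intro y hy
    refine ⟨fun hu => hl0nu y hy hu.1, ?_⟩
    intro v w hv hw hyvw
    have hv1 : ¬ r v 1 := fun h => hv ⟨h, hpos v⟩
    have hw1 : ¬ r w 1 := fun h => hw ⟨h, hpos w⟩
    obtain ⟨s, t, hst⟩ := List.append_of_mem hy
    have hlen0 : s.length + t.length + 1 = Nat.findGreatest T N := by
      rw [hst] at hl0len
      simp only [List.length_append, List.length_cons] at hl0len
      omega
    have hlen1 : (s ++ v :: w :: t).length = Nat.findGreatest T N + 1 := by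
      simp only [List.length_append, List.length_cons]
      omega
    have hprod1 : (s ++ v :: w :: t).prod = x := by
      rw [← hl0x, hst]
      simp only [List.prod_append, List.prod_cons]
      rw [hyvw, mul_assoc]
    have hnu1 : ∀ z ∈ s ++ v :: w :: t, ¬ r z 1 := by
      intro z hz
      rcases List.mem_append.mp hz with hz | hz
      · exact hl0nu z (by rw [hst]; exact List.mem_append.mpr (Or.inl hz))
      · rcases List.mem_cons.mp hz with rfl | hz
        · exact hv1
        · rcases List.mem_cons.mp hz with rfl | hz
          · exact hw1
          · exact hl0nu z (by
              rw [hst]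
              exact List.mem_append.mpr (Or.inr (List.mem_cons.mpr (Or.inr hz))))
    have hmemT : T (Nat.findGreatest T N + 1) := ⟨_, hnu1, hprod1, hlen1⟩
    have hle : Nat.findGreatest T N + 1 ≤ N := hTb _ hmemT
    have := Nat.le_findGreatest hle hmemT
    omega
  -- every atom which is a product of a good list is ≈ to an element of A'
  have hPatom : ∀ L : List H, (∀ g ∈ L, r g 1 ∨ ∃ a ∈ A', ¬ r g 1 ∧ r g a ∧ r a g) →
      RAtom r L.prod → ∃ a ∈ A', r L.prod a ∧ r a L.prod := by
    intro L
    induction L with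
    | nil =>
        intro _ hat
        rw [List.prod_nil] at hat
        exact absurd ⟨hrefl 1, hrefl 1⟩ hat.1
    | cons g t ih =>
        intro hP hat
        rw [List.prod_cons] at hat ⊢
        have hgnu1 : ¬ r (g * t.prod) 1 := fun h => hat.1 ⟨h, hpos _⟩
        rcases hP g (by simp) with hg1 | ⟨a, haA, hgnu, hga, hag⟩
        · have htnu : ¬ r t.prod 1 := fun h => hgnu1 (aux_unit_mul htrans hmul hg1 h)
          have htat : RAtom r t.prod := by
            refine ⟨fun hu => htnu hu.1, ?_⟩
            intro v w hv hw hvw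
            have hgv : RNonUnit r (g * v) := by
              intro hu
              exact hv ⟨htrans (aux_le_mul_left hmul hpos g v) hu.1, hpos v⟩
            exact hat.2 (g * v) w hgv hw (by rw [hvw, mul_assoc])
          obtain ⟨a, haA, h1, h2⟩ := ih (fun b hb => hP b (by simp [hb])) htat
          exact ⟨a, haA, htrans (aux_mul_left_le hmul hg1 t.prod) h1,
            htrans h2 (aux_le_mul_left hmul hpos g t.prod)⟩
        · by_cases ht1 : r t.prod 1
          · exact ⟨a, haA, htrans (aux_mul_right_le hmul ht1 g) hga,
              htrans hag (aux_le_mul_right hmul hpos g t.prod)⟩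
          · exact absurd rfl (hat.2 g t.prod (fun hu => hgnu hu.1) (fun hu => ht1 hu.1))
  have hatomclass : ∀ y : H, Dvd2 y x → RAtom r y → ∃ a ∈ A', r y a ∧ r a y := by
    intro y hdy hat
    obtain ⟨L, hLP, hLy⟩ := hdecomp y hdy
    subst hLy
    exact hPatom L hLP hat
  -- the canonical representative map
  let ρ : H → H := fun y => if h : ∃ a, a ∈ A' ∧ r y a ∧ r a y then h.choose else y
  have hρ : ∀ y : H, (∃ a, a ∈ A' ∧ r y a ∧ r a y) →
      ρ y ∈ A' ∧ r y (ρ y) ∧ r (ρ y) y := by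
    intro y h
    have he : ρ y = h.choose := dif_pos h
    rw [he]
    exact ⟨h.choose_spec.1, h.choose_spec.2.1, h.choose_spec.2.2⟩
  have hletter : ∀ l : List H, IsAtomicFac r x l → ∀ y ∈ l, ∃ a, a ∈ A' ∧ r y a ∧ r a y := by
    intro l hl y hy
    obtain ⟨a, haA, h1, h2⟩ := hatomclass y (hdvd_of_mem l y hl.2 hy) (hl.1 y hy)
    exact ⟨a, haA, h1, h2⟩
  -- lists over a finite set with bounded length form a finite set
  have hfinlists : ∀ n : ℕ, {w : List H | (∀ b ∈ w, b ∈ A') ∧ w.length ≤ n}.Finite := by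
    intro n
    induction n with
    | zero =>
        apply Set.Finite.subset (Set.finite_singleton ([] : List H))
        rintro w ⟨-, hlen⟩
        simp only [Set.mem_singleton_iff]
        exact List.length_eq_zero_iff.mp (Nat.le_zero.mp hlen)
    | succ k ih =>
        apply Set.Finite.subset
          ((Set.finite_singleton ([] : List H)).union (Set.Finite.image2 (· :: ·) hA'fin ih))
        rintro w ⟨hbA, hlen⟩
        cases w with
        | nil => exact Or.inl rfl
        | cons a t =>
            refine Or.inr (Set.mem_image2_of_mem (hbA a (by simp)) ?_)
            refine ⟨fun b hb => hbA b (by simp [hb]), ?_⟩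
            simp only [List.length_cons] at hlen
            omega
  have hfacnu : ∀ l : List H, IsAtomicFac r x l → ∀ y ∈ l, ¬ r y 1 :=
    fun l hl y hy h1 => (hl.1 y hy).1 ⟨h1, hpos y⟩
  have hΦmem : ∀ l : List H, IsAtomicFac r x l →
      (l.map ρ) ∈ {w : List H | (∀ b ∈ w, b ∈ A') ∧ w.length ≤ N} := by
    intro l hl
    refine ⟨?_, ?_⟩
    · intro b hb
      obtain ⟨y, hy, rfl⟩ := List.mem_map.mp hb
      exact (hρ y (hletter l hl y hy)).1
    · rw [List.length_map]
      exact hbound l (hfacnu l hl) hl.2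
  have hBfin : ((fun l : List H => l.map ρ) '' {l : List H | IsAtomicFac r x l}).Finite := by
    apply Set.Finite.subset (hfinlists N)
    rintro b ⟨l, hl, rfl⟩
    exact hΦmem l hl
  let ψ : List H → List H := fun b =>
    if h : ∃ l, IsAtomicFac r x l ∧ l.map ρ = b then h.choose else []
  have hψ : ∀ b, (∃ l, IsAtomicFac r x l ∧ l.map ρ = b) →
      IsAtomicFac r x (ψ b) ∧ (ψ b).map ρ = b := by
    intro b h
    have he : ψ b = h.choose := dif_pos h
    rw [he]
    exact ⟨h.choose_spec.1, h.choose_spec.2⟩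
  refine ⟨⟨l0, hl0atoms, hl0x⟩,
    ψ '' ((fun l : List H => l.map ρ) '' {l : List H | IsAtomicFac r x l}),
    hBfin.image ψ, ?_⟩
  intro l hl
  have hb : ∃ l', IsAtomicFac r x l' ∧ l'.map ρ = l.map ρ := ⟨l, hl, rfl⟩
  obtain ⟨hmfac, hmmap⟩ := hψ (l.map ρ) hb
  refine ⟨ψ (l.map ρ), ⟨l.map ρ, ⟨l, hl, rfl⟩, rfl⟩, hmfac, ?_⟩
  set m := ψ (l.map ρ) with hmdef
  have hlen : l.length = m.length := by
    have hcl := congrArg List.length hmmap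
    simp only [List.length_map] at hcl
    exact hcl.symm
  have key : ∀ (i : ℕ) (hi : i < l.length) (hi' : i < m.length),
      r (l.get ⟨i, hi⟩) (m.get ⟨i, hi'⟩) ∧ r (m.get ⟨i, hi'⟩) (l.get ⟨i, hi⟩) := by
    intro i hi hi'
    have hgm : ρ (l.get ⟨i, hi⟩) = ρ (m.get ⟨i, hi'⟩) := by
      have e1 : (m.map ρ)[i]'(by simpa using hi') = (l.map ρ)[i]'(by simpa using hi) := by
        simp only [hmmap]
      simp only [List.getElem_map] at e1
      simp only [List.get_eq_getElem]
      exact e1.symm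
    obtain ⟨hL1, hL2, hL3⟩ := hρ _ (hletter l hl _ (List.get_mem l ⟨i, hi⟩))
    obtain ⟨hM1, hM2, hM3⟩ := hρ _ (hletter m hmfac _ (List.get_mem m ⟨i, hi'⟩))
    constructor
    · exact htrans hL2 (by rw [hgm]; exact hM3)
    · exact htrans hM2 (by rw [← hgm]; exact hL3)
  refine ⟨⟨(finCongr hlen).toEmbedding, ?_⟩, ⟨(finCongr hlen.symm).toEmbedding, ?_⟩⟩
  · intro i
    exact key i.1 i.2 (by rw [← hlen]; exact i.2)
  · intro j
    have hjl : j.1 < l.length := by rw [hlen]; exact j.2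
    exact ⟨(key j.1 hjl j.2).2, (key j.1 hjl j.2).1⟩

end FactPaper
end

section
/- Every unit-cancellative, weakly l.f.g.u., commutative monoid is FF-atomic. -/
open Pointwise

namespace FactPaper

section Aux
variable {H : Type*} [CommMonoid H]

lemma dvd2_iff {p q : H} : Dvd2 p q ↔ p ∣ q := by
  constructor
  · rintro ⟨u, v, rfl⟩
    exact ⟨u * v, by rw [mul_comm u p, mul_assoc]⟩
  · rintro ⟨c, rfl⟩
    exact ⟨1, c, by rw [one_mul]⟩

lemma runit_iff {u : H} : RUnit (Dvd2 : H → H → Prop) u ↔ IsUnit u := by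
  constructor
  · rintro ⟨h1, _⟩
    exact isUnit_of_dvd_one (dvd2_iff.mp h1)
  · intro h
    exact ⟨dvd2_iff.mpr h.dvd, dvd2_iff.mpr (one_dvd u)⟩

lemma assoc_unit (huc : ∀ x y : H, ¬ IsUnit y → x * y ≠ x) {p q : H}
    (h1 : p ∣ q) (h2 : q ∣ p) : ∃ ε : H, IsUnit ε ∧ q = ε * p := by
  obtain ⟨c, rfl⟩ := h1
  obtain ⟨d, hd⟩ := h2
  have hpcd : p * (c * d) = p := by rw [← mul_assoc]; exact hd.symm
  have hcd : IsUnit (c * d) := by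
    by_contra h
    exact huc p _ h hpcd
  exact ⟨c, isUnit_of_mul_isUnit_left hcd, mul_comm p c⟩

lemma perm_getEquiv {α : Type*} {l m : List α} (h : l.Perm m) :
    ∃ σ : Fin l.length ≃ Fin m.length, ∀ i, l.get i = m.get (σ i) := by
  induction h with
  | nil => exact ⟨Equiv.refl _, fun i => i.elim0⟩
  | cons a h ih =>
      obtain ⟨σ, hσ⟩ := ih
      refine ⟨(finSuccEquiv _).trans ((σ.optionCongr).trans (finSuccEquiv _).symm), ?_⟩
      intro i
      refine Fin.cases ?_ ?_ i
      · simp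
      · intro j
        simpa using hσ j
  | swap a b l =>
      have h0 : 0 < l.length + 2 := by omega
      have h1 : 1 < l.length + 2 := by omega
      refine ⟨(Equiv.swap (⟨0, h0⟩ : Fin (l.length + 2)) ⟨1, h1⟩ :
        Fin (l.length + 2) ≃ Fin (l.length + 2)), ?_⟩
      rintro ⟨k, hk⟩
      match k, hk with
      | 0, hk =>
        exact (congrArg (a :: b :: l).get
          (Equiv.swap_apply_left (⟨0, h0⟩ : Fin (l.length + 2)) ⟨1, h1⟩)).symm
      | 1, hk =>
        exact (congrArg (a :: b :: l).get
          (Equiv.swap_apply_right (⟨0, h0⟩ : Fin (l.length + 2)) ⟨1, h1⟩)).symm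
      | (k + 2), hk =>
        exact (congrArg (a :: b :: l).get
          (Equiv.swap_apply_of_ne_of_ne
            (Fin.ne_of_val_ne (show k + 2 ≠ 0 by omega) :
              (⟨k + 2, hk⟩ : Fin (l.length + 2)) ≠ ⟨0, h0⟩)
            (Fin.ne_of_val_ne (show k + 2 ≠ 1 by omega) :
              (⟨k + 2, hk⟩ : Fin (l.length + 2)) ≠ ⟨1, h1⟩))).symm
  | trans h1 h2 ih1 ih2 =>
      obtain ⟨σ1, hσ1⟩ := ih1
      obtain ⟨σ2, hσ2⟩ := ih2
      exact ⟨σ1.trans σ2, fun i => (hσ1 i).trans (hσ2 (σ1 i))⟩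

end Aux

/-- Corollary 5.3. Every unit-cancellative, weakly l.f.g.u.,
commutative monoid is FF-atomic (w.r.t. the divisibility preorder `∣_H`). -/
theorem stmt16 {H : Type*} [CommMonoid H]
    (huc : ∀ x y : H, ¬ IsUnit y → x * y ≠ x)
    (hwlfgu : ∀ x : H, RNonUnit (Dvd2 : H → H → Prop) x →
      IsFGU (SubRel (Dvd2 : H → H → Prop) (GermSub x))) :
    IsFFAtomic (Dvd2 : H → H → Prop) := by
  classical
  intro x hx
  have rnu : ∀ p : H, RNonUnit (Dvd2 : H → H → Prop) p ↔ ¬ IsUnit p := by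
    intro p; unfold RNonUnit; rw [runit_iff]
  have hxu : ¬ IsUnit x := (rnu x).mp hx
  obtain ⟨A, hAfin, hAgen⟩ := hwlfgu x hx
  set sset : Set H := {b : H | b ∈ (Subtype.val '' A) ∧ ¬ IsUnit b} with hssetdef
  have hsfin : sset.Finite := (hAfin.image _).subset (fun b hb => hb.1)
  -- generation of divisors of x from sset up to units
  have hgen : ∀ y : H, y ∣ x → ∃ (ε : H) (t : Multiset H), IsUnit ε ∧
      (∀ b ∈ t, b ∈ sset) ∧ y = ε * t.prod := by
    intro y hy
    have hyK : y ∈ GermSub x := Submonoid.subset_closure (dvd2_iff.mpr hy)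
    have key : ∀ z : GermSub x, z ∈ Submonoid.closure {w : GermSub x |
        ∃ u a v : GermSub x, RUnit (SubRel (Dvd2 : H → H → Prop) (GermSub x)) u ∧ a ∈ A ∧
          RUnit (SubRel (Dvd2 : H → H → Prop) (GermSub x)) v ∧ w = u * a * v} →
        ∃ (ε : H) (t : Multiset H), IsUnit ε ∧ (∀ b ∈ t, b ∈ sset) ∧ (z : H) = ε * t.prod := by
      intro z hz
      induction hz using Submonoid.closure_induction with
      | mem w hw =>
          obtain ⟨u, a, v, hu, ha, hv, rfl⟩ := hw
          have huu : IsUnit (u : H) := isUnit_of_dvd_one (dvd2_iff.mp hu.1)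
          have hvv : IsUnit (v : H) := isUnit_of_dvd_one (dvd2_iff.mp hv.1)
          by_cases hau : IsUnit (a : H)
          · exact ⟨(u : H) * a * v, 0, (huu.mul hau).mul hvv, by simp, by push_cast; simp⟩
          · refine ⟨(u : H) * v, {(a : H)}, huu.mul hvv, ?_, ?_⟩
            · intro b hb
              rw [Multiset.mem_singleton] at hb
              subst hb
              exact ⟨⟨a, ha, rfl⟩, hau⟩
            · push_cast
              rw [Multiset.prod_singleton]
              exact mul_right_comm (u : H) a v
      | one => exact ⟨1, 0, isUnit_one, by simp, by simp⟩
      | mul z w hz hw ihz ihw =>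
          obtain ⟨ε1, t1, hε1, ht1, h1⟩ := ihz
          obtain ⟨ε2, t2, hε2, ht2, h2⟩ := ihw
          refine ⟨ε1 * ε2, t1 + t2, hε1.mul hε2, fun b hb => ?_, ?_⟩
          · rcases Multiset.mem_add.mp hb with h | h
            exacts [ht1 b h, ht2 b h]
          · push_cast
            rw [h1, h2, Multiset.prod_add]
            exact mul_mul_mul_comm ε1 t1.prod ε2 t2.prod
    have := key ⟨y, hyK⟩ (by rw [hAgen]; exact Submonoid.mem_top _)
    exact this
  -- the exponent multisets
  set MS : H → Set (Multiset H) := fun y =>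
    {t | (∀ b ∈ t, b ∈ sset) ∧ ∃ ε, IsUnit ε ∧ y = ε * t.prod} with hMSdef
  have hMSne : ∀ y : H, y ∣ x → (MS y).Nonempty := by
    intro y hy
    obtain ⟨ε, t, h1, h2, h3⟩ := hgen y hy
    exact ⟨t, h2, ε, h1, h3⟩
  have hprodnu : ∀ t : Multiset H, (∀ b ∈ t, b ∈ sset) → t ≠ 0 → ¬ IsUnit t.prod := by
    intro t ht h0 hu
    obtain ⟨b, hb⟩ := Multiset.exists_mem_of_ne_zero h0
    exact (ht b hb).2 (isUnit_of_dvd_unit (Multiset.dvd_prod hb) hu)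
  have hcard0 : ∀ y : H, ¬ IsUnit y → ∀ t ∈ MS y, t ≠ 0 := by
    rintro y hy t ⟨ht, ε, hε, hyt⟩ rfl
    rw [Multiset.prod_zero, mul_one] at hyt
    exact hy (hyt ▸ hε)
  have hMSmul : ∀ y z : H, ∀ ty tz : Multiset H, ty ∈ MS y → tz ∈ MS z →
      ty + tz ∈ MS (y * z) := by
    rintro y z ty tz ⟨hty, ε, hε, h1⟩ ⟨htz, η, hη, h2⟩
    refine ⟨fun b hb => ?_, ε * η, hε.mul hη, ?_⟩
    · rcases Multiset.mem_add.mp hb with h | h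
      exacts [hty b h, htz b h]
    · rw [h1, h2, Multiset.prod_add]
      exact mul_mul_mul_comm ε ty.prod η tz.prod
  have hanti : ∀ y : H, ∀ t t' : Multiset H, t ∈ MS y → t' ∈ MS y → t ≤ t' → t = t' := by
    rintro y t t' ⟨ht, ε, hε, hy1⟩ ⟨ht', η, hη, hy2⟩ hle
    have hsub : t + (t' - t) = t' := add_tsub_cancel_of_le hle
    by_cases h0 : t' - t = 0
    · rw [h0, add_zero] at hsub
      exact hsub
    · exfalso
      obtain ⟨e, he⟩ := hε.exists_left_inv
      have hep : e * y = t.prod := by rw [hy1, ← mul_assoc, he, one_mul]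
      have hpnu : ¬ IsUnit (t' - t).prod :=
        hprodnu _ (fun b hb => ht' b (Multiset.mem_of_le tsub_le_self hb)) h0
      have hyy : y * (η * e * (t' - t).prod) = y := by
        conv_rhs => rw [hy2, ← hsub, Multiset.prod_add, ← hep]
        simp only [mul_comm, mul_left_comm, mul_assoc]
      have hun : IsUnit (η * e * (t' - t).prod) := by
        by_contra h
        exact huc y _ h hyy
      exact hpnu (isUnit_of_mul_isUnit_right hun)
  -- finiteness of MS x
  have hMSfin : (MS x).Finite := by
    by_contra hinf
    have hinf' : (MS x).Infinite := hinf
    have : Finite ↥sset := hsfin.to_subtype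
    set φ : Multiset H → (↥sset → ℕ) := fun t b => t.count ↑b with hφ
    set f := hinf'.natEmbedding with hf
    have hfinset : Finite ↥sset := hsfin.to_subtype
    have hpwo : (Set.univ : Set (↥sset → ℕ)).IsPWO :=
      Set.isPWO_of_wellQuasiOrderedLE _
    obtain ⟨m, n, hmn, hle⟩ := hpwo.exists_lt (f := fun k => φ ((f k : Multiset H))) (fun k => Set.mem_univ _)
    have hle' : ((f m : Multiset H)) ≤ ((f n : Multiset H)) := by
      rw [Multiset.le_iff_count]
      intro b
      by_cases hb : b ∈ sset
      · exact hle ⟨b, hb⟩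
      · have : b ∉ ((f m : Multiset H)) := fun hmem => hb ((f m).2.1 b hmem)
        rw [Multiset.count_eq_zero_of_notMem this]
        exact Nat.zero_le _
    have heq : (f m : Multiset H) = (f n : Multiset H) :=
      hanti x _ _ (f m).2 (f n).2 hle'
    exact Nat.ne_of_lt hmn (f.injective (Subtype.ext heq))
  obtain ⟨N, hN⟩ : ∃ N : ℕ, ∀ t ∈ MS x, Multiset.card t ≤ N := by
    obtain ⟨N, hNub⟩ := (hMSfin.image Multiset.card).bddAbove
    exact ⟨N, fun t ht => hNub (Set.mem_image_of_mem _ ht)⟩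
  -- atomization
  have hatomize : ∀ n : ℕ, ∀ y : H, y ∣ x → ¬ IsUnit y →
      (∀ t ∈ MS y, Multiset.card t ≤ n) →
      ∃ l : List H, (∀ p ∈ l, RAtom (Dvd2 : H → H → Prop) p) ∧ l.prod = y := by
    intro n
    induction n using Nat.strong_induction_on with
    | _ n ih =>
    intro y hyx hyu hbound
    by_cases hat : RAtom (Dvd2 : H → H → Prop) y
    · exact ⟨[y], by simpa using hat, by simp⟩
    · have hy' : RNonUnit (Dvd2 : H → H → Prop) y := (rnu y).mpr hyu
      have hexy : ∃ y1 y2 : H, ¬ IsUnit y1 ∧ ¬ IsUnit y2 ∧ y = y1 * y2 := by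
        rw [RAtom] at hat
        push_neg at hat
        obtain ⟨y1, y2, h1, h2, h3⟩ := hat hy'
        exact ⟨y1, y2, (rnu y1).mp h1, (rnu y2).mp h2, h3⟩
      obtain ⟨y1, y2, h1, h2, rfl⟩ := hexy
      have hd1 : y1 ∣ x := dvd_trans (dvd_mul_right y1 y2) hyx
      have hd2 : y2 ∣ x := dvd_trans (dvd_mul_left y2 y1) hyx
      obtain ⟨t1, ht1⟩ := hMSne y1 hd1
      obtain ⟨t2, ht2⟩ := hMSne y2 hd2
      have hc1 : 0 < Multiset.card t1 := Multiset.card_pos.mpr (hcard0 y1 h1 t1 ht1)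
      have hc2 : 0 < Multiset.card t2 := Multiset.card_pos.mpr (hcard0 y2 h2 t2 ht2)
      have hn2 : 2 ≤ n := by
        have := hbound (t1 + t2) (hMSmul _ _ _ _ ht1 ht2)
        rw [Multiset.card_add] at this
        omega
      have hb1 : ∀ t ∈ MS y1, Multiset.card t ≤ n - 1 := by
        intro t ht
        have := hbound (t + t2) (hMSmul _ _ _ _ ht ht2)
        rw [Multiset.card_add] at this
        omega
      have hb2 : ∀ t ∈ MS y2, Multiset.card t ≤ n - 1 := by
        intro t ht
        have h' : t1 + t ∈ MS (y1 * y2) := hMSmul _ _ _ _ ht1 ht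
        have := hbound (t1 + t) h'
        rw [Multiset.card_add] at this
        omega
      obtain ⟨l1, hl1, hp1⟩ := ih (n - 1) (by omega) y1 hd1 h1 hb1
      obtain ⟨l2, hl2, hp2⟩ := ih (n - 1) (by omega) y2 hd2 h2 hb2
      exact ⟨l1 ++ l2, fun p hp => (List.mem_append.mp hp).elim (hl1 p) (hl2 p),
        by rw [List.prod_append, hp1, hp2]⟩
  -- classification of atoms dividing x
  have hatomcl : ∀ p : H, RAtom (Dvd2 : H → H → Prop) p → p ∣ x →
      ∃ b, b ∈ sset ∧ p ∣ b ∧ b ∣ p := by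
    intro p hp hpx
    obtain ⟨ε, t, hε, hts, hpt⟩ := hgen p hpx
    have hpu : ¬ IsUnit p := (rnu p).mp hp.1
    have ht0 : t ≠ 0 := by
      rintro rfl
      rw [Multiset.prod_zero, mul_one] at hpt
      exact hpu (hpt ▸ hε)
    obtain ⟨b, hb⟩ := Multiset.exists_mem_of_ne_zero ht0
    obtain ⟨u, rfl⟩ := Multiset.exists_cons_of_mem hb
    by_cases hu0 : u = 0
    · subst hu0
      obtain ⟨e, he⟩ := hε.exists_left_inv
      have hpb : p = ε * b := by
        rw [hpt]
        simp
      refine ⟨b, hts b (Multiset.mem_cons_self b 0), ⟨e, ?_⟩, ⟨ε, ?_⟩⟩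
      · have h' : e * p = b := by rw [hpb, ← mul_assoc, he, one_mul]
        rw [← h', mul_comm]
      · rw [hpb, mul_comm]
    · exfalso
      have hbu : ¬ IsUnit (ε * b) := fun h =>
        (hts b (Multiset.mem_cons_self b u)).2 (isUnit_of_mul_isUnit_right h)
      have huu : ¬ IsUnit u.prod :=
        hprodnu u (fun c hc => hts c (Multiset.mem_cons_of_mem hc)) hu0
      exact hp.2 (ε * b) u.prod ((rnu _).mpr hbu) ((rnu _).mpr huu)
        (by rw [hpt, Multiset.prod_cons, ← mul_assoc])
  -- class function
  obtain ⟨cl, hclspec⟩ : ∃ cl : H → H, ∀ p : H, RAtom (Dvd2 : H → H → Prop) p → p ∣ x →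
      cl p ∈ sset ∧ p ∣ cl p ∧ cl p ∣ p := by
    refine ⟨fun p => if h : ∃ b, b ∈ sset ∧ p ∣ b ∧ b ∣ p then h.choose else p,
      fun p hp hpx => ?_⟩
    have h := hatomcl p hp hpx
    simp only [dif_pos h]
    exact h.choose_spec
  have hletters : ∀ l : List H, IsAtomicFac (Dvd2 : H → H → Prop) x l →
      ∀ p ∈ l, RAtom (Dvd2 : H → H → Prop) p ∧ p ∣ x := by
    intro l hl p hp
    exact ⟨hl.1 p hp, hl.2 ▸ List.dvd_prod hp⟩
  -- product transfer
  have hprodcl : ∀ l : List H, (∀ p ∈ l, ∃ η, IsUnit η ∧ p = η * cl p) →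
      ∃ ε : H, IsUnit ε ∧ l.prod = ε * (l.map cl).prod := by
    intro l
    induction l with
    | nil => exact fun _ => ⟨1, isUnit_one, by simp⟩
    | cons p l ihl =>
        intro h
        obtain ⟨η, hη, hp⟩ := h p List.mem_cons_self
        obtain ⟨ε, hε, hl'⟩ := ihl (fun q hq => h q (List.mem_cons_of_mem _ hq))
        refine ⟨η * ε, hη.mul hε, ?_⟩
        rw [List.map_cons, List.prod_cons, List.prod_cons, hl']
        conv_lhs => rw [hp]
        exact mul_mul_mul_comm η (cl p) ε ((l.map cl).prod)
  have hmap_mem : ∀ l : List H, IsAtomicFac (Dvd2 : H → H → Prop) x l →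
      ((l.map cl : List H) : Multiset H) ∈ MS x := by
    intro l hl
    constructor
    · intro b hb
      rw [Multiset.mem_coe, List.mem_map] at hb
      obtain ⟨p, hp, rfl⟩ := hb
      exact (hclspec p (hl.1 p hp) ((hletters l hl p hp).2)).1
    · obtain ⟨ε, hε, hpr⟩ := hprodcl l (fun p hp => by
        obtain ⟨hb, h1, h2⟩ := hclspec p (hl.1 p hp) ((hletters l hl p hp).2)
        exact assoc_unit huc h2 h1)
      exact ⟨ε, hε, by rw [← hl.2, hpr, Multiset.prod_coe]⟩
  -- WordLe from Perm of classes
  have hWle : ∀ l m : List H,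
      (∀ p ∈ l, p ∣ cl p ∧ cl p ∣ p) → (∀ p ∈ m, p ∣ cl p ∧ cl p ∣ p) →
      (l.map cl).Perm (m.map cl) → WordLe (Dvd2 : H → H → Prop) l m := by
    intro l m hl hm hperm
    obtain ⟨σ, hσ⟩ := perm_getEquiv hperm
    have e1 : (l.map cl).length = l.length := List.length_map cl
    have e2 : (m.map cl).length = m.length := List.length_map cl
    refine ⟨((finCongr e1.symm).trans (σ.trans (finCongr e2))).toEmbedding, ?_⟩
    intro i
    show Dvd2 (l.get i) (m.get (finCongr e2 (σ (finCongr e1.symm i)))) ∧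
      Dvd2 (m.get (finCongr e2 (σ (finCongr e1.symm i)))) (l.get i)
    set j : Fin m.length := finCongr e2 (σ (finCongr e1.symm i)) with hj
    have hh := hσ (finCongr e1.symm i)
    have hclget : cl (l.get i) = cl (m.get j) := by
      simpa [hj, List.get_eq_getElem, List.getElem_map] using hh
    obtain ⟨ha1, ha2⟩ := hl _ (List.get_mem l i)
    obtain ⟨hb1, hb2⟩ := hm _ (List.get_mem m j)
    constructor
    · refine dvd2_iff.mpr (dvd_trans ha1 ?_)
      rw [hclget]
      exact hb2
    · refine dvd2_iff.mpr (dvd_trans hb1 ?_)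
      rw [← hclget]
      exact ha2
  have hWeq : ∀ l m : List H, IsAtomicFac (Dvd2 : H → H → Prop) x l →
      IsAtomicFac (Dvd2 : H → H → Prop) x m →
      ((l.map cl : List H) : Multiset H) = ((m.map cl : List H) : Multiset H) →
      WordEquiv (Dvd2 : H → H → Prop) l m := by
    intro l m hl hm heq
    have hperm : (l.map cl).Perm (m.map cl) := Multiset.coe_eq_coe.mp heq
    have hld : ∀ p ∈ l, p ∣ cl p ∧ cl p ∣ p := fun p hp =>
      (hclspec p (hl.1 p hp) ((hletters l hl p hp).2)).2
    have hmd : ∀ p ∈ m, p ∣ cl p ∧ cl p ∣ p := fun p hp =>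
      (hclspec p (hm.1 p hp) ((hletters m hm p hp).2)).2
    exact ⟨hWle l m hld hmd hperm, hWle m l hmd hld hperm.symm⟩
  -- assemble
  obtain ⟨lx, hlx1, hlx2⟩ := hatomize N x dvd_rfl hxu hN
  have hfacx : IsAtomicFac (Dvd2 : H → H → Prop) x lx := ⟨hlx1, hlx2⟩
  refine ⟨⟨lx, hfacx⟩, ?_⟩
  obtain ⟨g, hg⟩ : ∃ g : Multiset H → List H, ∀ t : Multiset H,
      (∃ l : List H, IsAtomicFac (Dvd2 : H → H → Prop) x l ∧
        ((l.map cl : List H) : Multiset H) = t) →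
      IsAtomicFac (Dvd2 : H → H → Prop) x (g t) ∧
        (((g t).map cl : List H) : Multiset H) = t := by
    refine ⟨fun t => if h : ∃ l : List H, IsAtomicFac (Dvd2 : H → H → Prop) x l ∧
        ((l.map cl : List H) : Multiset H) = t then h.choose else [], fun t h => ?_⟩
    simp only [dif_pos h]
    exact h.choose_spec
  refine ⟨g '' MS x, hMSfin.image g, ?_⟩
  intro l hl
  have hmem := hmap_mem l hl
  have hspec := hg ((l.map cl : List H) : Multiset H) ⟨l, hl, rfl⟩
  exact ⟨g ((l.map cl : List H) : Multiset H), Set.mem_image_of_mem g hmem, hspec.1,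
    hWeq l _ hl hspec.1 hspec.2.symm⟩


end FactPaper
end

section
/- Let H be a left duo monoid. Then for all x₁, …, xₙ ∈ H and every strictly increasing function σ : {1, …, m} → {1, …, n}, one has Hx₁H · Hx₂H ⋯ HxₙH ⊆ H·(x_{σ(1)} x_{σ(2)} ⋯ x_{σ(m)}). -/
open Pointwise

namespace FactPaper

theorem key {H : Type*} [Monoid H]
    (hduo : ∀ a b : H, ∃ c : H, a * b = c * a) :
    ∀ {l l' : List H}, List.Sublist l' l →
      (l.map fun a => (Set.univ : Set H) * {a} * (Set.univ : Set H)).prod ⊆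
        (Set.univ : Set H) * {l'.prod} := by
  intro l l' h
  induction h with
  | slnil =>
      simp only [List.map_nil, List.prod_nil]
      intro z hz
      rw [Set.mem_one] at hz
      exact ⟨1, trivial, 1, rfl, by simp [hz]⟩
  | cons _ h ih =>
      simp only [List.map_cons, List.prod_cons]
      rintro z ⟨y, ⟨w, ⟨h1, -, a2, rfl, rfl⟩, h2, -, rfl⟩, t, ht, rfl⟩
      obtain ⟨u, -, p, hp, rfl⟩ := ih ht
      rw [Set.mem_singleton_iff] at hp
      exact ⟨h1 * a2 * h2 * u, trivial, p, hp, by simp [mul_assoc]⟩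
  | cons_cons _ h ih =>
      simp only [List.map_cons, List.prod_cons]
      rintro z ⟨y, ⟨w, ⟨h1, -, a2, rfl, rfl⟩, h2, -, rfl⟩, t, ht, rfl⟩
      obtain ⟨u, -, p, hp, rfl⟩ := ih ht
      rw [Set.mem_singleton_iff] at hp
      obtain ⟨d, hd⟩ := hduo a2 (h2 * u)
      refine ⟨h1 * d, trivial, a2 * p, by rw [hp]; exact rfl, ?_⟩
      show h1 * d * (a2 * p) = h1 * a2 * h2 * (u * p)
      calc h1 * d * (a2 * p) = h1 * (d * a2) * p := by simp [mul_assoc]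
        _ = h1 * (a2 * (h2 * u)) * p := by rw [hd]
        _ = h1 * a2 * h2 * (u * p) := by simp [mul_assoc]

/-- Lemma 5.5. If `H` is a left duo monoid, then for all
`x₁, …, xₙ ∈ H` and every strictly increasing `σ : Fin m → Fin n`, one has
`Hx₁H ⋯ HxₙH ⊆ H · (x_{σ 0} ⋯ x_{σ (m-1)})`. -/
theorem stmt17 {H : Type*} [Monoid H]
    (hduo : ∀ a b : H, ∃ c : H, a * b = c * a)
    {n m : ℕ} (x : Fin n → H) (σ : Fin m → Fin n) (hσ : StrictMono σ) :
    (List.ofFn fun i : Fin n =>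
        ((Set.univ : Set H) * {x i} * (Set.univ : Set H))).prod ⊆
      (Set.univ : Set H) * {(List.ofFn fun j : Fin m => x (σ j)).prod} := by
  have hsub : List.Sublist (List.ofFn fun j => x (σ j)) (List.ofFn x) := by
    rw [List.sublist_iff_exists_fin_orderEmbedding_get_eq]
    refine ⟨((Fin.castOrderIso (List.length_ofFn (f := fun j => x (σ j)))).toOrderEmbedding.trans
      (OrderEmbedding.ofStrictMono σ hσ)).trans
      (Fin.castOrderIso (List.length_ofFn (f := x)).symm).toOrderEmbedding, ?_⟩
    intro i
    simp only [List.get_ofFn]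
    congr
  have h2 := key hduo hsub
  rwa [List.map_ofFn] at h2


end FactPaper
end
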